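/- If G is a {2K_2, C_4}-free graph, then χ(G) ≤ ω(G) + 1. -/

import Mathlib

open SimpleGraph

/-- The disjoint union of `p` edges. -/
def pK2 (p : ℕ) : SimpleGraph (Fin p × Fin 2) where
  Adj a b := a.1 = b.1 ∧ a.2 ≠ b.2
  symm := ⟨fun _ _ h => ⟨h.1.symm, h.2.symm⟩⟩
  loopless := ⟨fun _ h => h.2 rfl⟩

/-- `G` is `H`-free: no induced subgraph of `G` is isomorphic to `H`. -/
def IsFreeOf {V W : Type*} (G : SimpleGraph V) (H : SimpleGraph W) : Prop :=
  IsEmpty (H ↪g G)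

/-- A graph on `Fin n` with edges given by a list of pairs. -/
def graphOfList (n : ℕ) (l : List (ℕ × ℕ)) : SimpleGraph (Fin n) :=
  SimpleGraph.fromRel (fun a b => ((a : ℕ), (b : ℕ)) ∈ l)

/-- The cycle on 4 vertices. -/
def C4 : SimpleGraph (Fin 4) :=
  graphOfList 4 [(0,1),(1,2),(2,3),(3,0)]

open Finset

section

variable {V : Type*} {G : SimpleGraph V}

lemma no2K2 (h1 : IsFreeOf G (pK2 2)) {w x y z : V} (hwx : G.Adj w x) (hyz : G.Adj y z)
    (h3 : ¬G.Adj w y) (h4 : ¬G.Adj w z) (h5 : ¬G.Adj x y) (h6 : ¬G.Adj x z)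
    (h7 : w ≠ y) (h8 : w ≠ z) (h9 : x ≠ y) (h10 : x ≠ z) : False := by
  have hwx' := hwx.ne
  have hyz' := hyz.ne
  have s1 := hwx.symm
  have s2 := hyz.symm
  have s3 : ¬G.Adj y w := fun h => h3 h.symm
  have s4 : ¬G.Adj z w := fun h => h4 h.symm
  have s5 : ¬G.Adj y x := fun h => h5 h.symm
  have s6 : ¬G.Adj z x := fun h => h6 h.symm
  apply h1.false
  refine ⟨⟨fun p => ![![w, x], ![y, z]] p.1 p.2, ?_⟩, ?_⟩
  · intro a b hab
    fin_cases a <;> fin_cases b <;> simp_all [Matrix.cons_val_zero, Matrix.cons_val_one]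
  · intro a b
    fin_cases a <;> fin_cases b <;>
      simp_all [pK2, Matrix.cons_val_zero, Matrix.cons_val_one, G.irrefl]

lemma noC4 (h2 : IsFreeOf G C4) {p q r s : V} (hpq : G.Adj p q) (hqr : G.Adj q r)
    (hrs : G.Adj r s) (hsp : G.Adj s p) (hpr : ¬G.Adj p r) (hqs : ¬G.Adj q s)
    (h7 : p ≠ r) (h8 : q ≠ s) : False := by
  have d1 := hpq.ne
  have d2 := hqr.ne
  have d3 := hrs.ne
  have d4 := hsp.ne
  have s1 := hpq.symm
  have s2 := hqr.symm
  have s3 := hrs.symm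
  have s4 := hsp.symm
  have t1 : ¬G.Adj r p := fun h => hpr h.symm
  have t2 : ¬G.Adj s q := fun h => hqs h.symm
  apply h2.false
  refine ⟨⟨![p, q, r, s], ?_⟩, ?_⟩
  · intro a b hab
    fin_cases a <;> fin_cases b <;> simp_all
  · intro a b
    fin_cases a <;> fin_cases b <;>
      simp_all [C4, graphOfList, fromRel_adj, G.irrefl] <;> assumption

section
variable [Fintype V]

lemma clique_insert_absurd {K : Finset V} (hK : G.IsNClique G.cliqueNum K) {w : V}
    (hall : ∀ x ∈ K, G.Adj w x) : False := by
  classical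
  have h := (hK.insert hall).isClique.card_le_cliqueNum
  rw [(hK.insert hall).card_eq] at h
  omega

lemma step2 (h1 : IsFreeOf G (pK2 2)) (h2 : IsFreeOf G C4)
    {K : Finset V} (hK : G.IsNClique G.cliqueNum K)
    {u v : V} (hu : u ∉ K) (hv : v ∉ K) (huv : G.Adj u v) :
    ∃ p q m, ((p, q) = (u, v) ∨ (p, q) = (v, u)) ∧ m ∈ K ∧
      (∀ x ∈ K, ¬G.Adj p x ↔ x = m) ∧ (∀ x ∈ K, G.Adj q x → G.Adj p x) := by
  -- the claim, given the containment N(q) ∩ K ⊆ N(p)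
  have claim : ∀ p q : V, p ∉ K → q ∉ K → G.Adj p q →
      (∀ x ∈ K, G.Adj q x → G.Adj p x) →
      ∃ m, m ∈ K ∧ (∀ x ∈ K, ¬G.Adj p x ↔ x = m) ∧ (∀ x ∈ K, G.Adj q x → G.Adj p x) := by
    intro p q hp hq hpq hcont
    -- p has a non-neighbor in K
    have hex : ∃ m ∈ K, ¬G.Adj p m := by
      by_contra h
      push_neg at h
      exact clique_insert_absurd hK h
    obtain ⟨m, hmK, hpm⟩ := hex
    refine ⟨m, hmK, fun x hxK => ⟨fun hpx => ?_, fun h => h ▸ hpm⟩, hcont⟩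
    by_contra hxm
    -- x ≠ m, both non-neighbors of p, hence of q too; 2K2 with edge pq and edge xm
    have hqx : ¬G.Adj q x := fun h => hpx (hcont x hxK h)
    have hqm : ¬G.Adj q m := fun h => hpm (hcont m hmK h)
    have hxmadj : G.Adj x m := hK.isClique hxK hmK hxm
    exact no2K2 h1 hpq hxmadj hpx hpm hqx hqm
      (fun h => hp (h ▸ hxK)) (fun h => hp (h ▸ hmK))
      (fun h => hq (h ▸ hxK)) (fun h => hq (h ▸ hmK))
  by_cases hcase : ∀ x ∈ K, G.Adj u x → G.Adj v x
  · obtain ⟨m, h⟩ := claim v u hv hu huv.symm hcase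
    exact ⟨v, u, m, Or.inr rfl, h⟩
  · push_neg at hcase
    obtain ⟨x, hxK, hux, hvx⟩ := hcase
    have hcase2 : ∀ y ∈ K, G.Adj v y → G.Adj u y := by
      intro y hyK hvy
      by_contra huy
      -- C4 : u - x - y - v - u
      have hxy : x ≠ y := fun h => hvx (h ▸ hvy)
      exact noC4 h2 hux (hK.isClique hxK hyK hxy) hvy.symm huv.symm
        huy (fun h => hvx h.symm) (fun h => hu (h ▸ hyK)) (fun h => hv (h.symm ▸ hxK))
    obtain ⟨m, h⟩ := claim u v hu hv huv hcase2
    exact ⟨u, v, m, Or.inl rfl, h⟩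

lemma exists_degree_le (h1 : IsFreeOf G (pK2 2)) (h2 : IsFreeOf G C4)
    [DecidableRel G.Adj] (hne : Nonempty V) :
    ∃ v, G.degree v ≤ G.cliqueNum := by
  classical
  by_contra hcon
  push_neg at hcon
  obtain ⟨K, hK⟩ := G.exists_isNClique_cliqueNum
  -- notation
  set ω := G.cliqueNum with hω
  -- ω ≥ 2 : there is an edge
  have hedge : ∃ a b, G.Adj a b := by
    obtain ⟨v0⟩ := hne
    have := hcon v0
    obtain ⟨w0, hw0⟩ := (G.degree_pos_iff_exists_adj v0).mp (by omega)
    exact ⟨v0, w0, hw0⟩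
  have hω2 : 2 ≤ ω := by
    obtain ⟨a, b, hab⟩ := hedge
    have hcl : G.IsNClique 2 {a, b} := by
      constructor
      · intro x hx y hy hxy
        simp only [coe_insert, Set.mem_insert_iff, coe_singleton, Set.mem_singleton_iff] at hx hy
        rcases hx with rfl | rfl <;> rcases hy with rfl | rfl <;>
          first | exact absurd rfl hxy | exact hab | exact hab.symm
      · rw [card_insert_of_notMem (by simp [hab.ne]), card_singleton]
    have := hcl.isClique.card_le_cliqueNum
    rw [hcl.card_eq] at this
    exact this
  -- some vertex outside K
  have hKne : K ≠ univ := by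
    intro h
    obtain ⟨v0⟩ := hne
    have h3 := G.degree_lt_card_verts v0
    have h4 := hcon v0
    have : K.card = Fintype.card V := by rw [h, card_univ]
    rw [hK.card_eq] at this
    omega
  have hexu : ∃ u, u ∉ K := by
    by_contra h
    push_neg at h
    exact hKne (eq_univ_iff_forall.mpr h)
  obtain ⟨u, huK⟩ := hexu
  -- a neighbor of u outside K
  have hout : ∀ e, e ∉ K → ∃ w, w ∉ K ∧ G.Adj e w := by
    intro e heK
    by_contra h
    push_neg at h
    have hsub : G.neighborFinset e ⊆ K := by
      intro w hw
      by_contra hwK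
      exact (h w hwK) ((mem_neighborFinset _ _ _).mp hw)
    have := card_le_card hsub
    rw [card_neighborFinset_eq_degree, hK.card_eq] at this
    have := hcon e
    omega
  obtain ⟨w, hwK, huw⟩ := hout u huK
  -- apply step2 to edge u w : get b with unique non-neighbor m in K
  obtain ⟨b, a', m, hor, hmK, hbiff, -⟩ := step2 h1 h2 hK huK hwK huw
  have hbK : b ∉ K := by
    rcases hor with h | h <;> rw [Prod.mk.injEq] at h <;> obtain ⟨rfl, rfl⟩ := h <;> assumption
  have hbm : ¬G.Adj b m := (hbiff m hmK).mpr rfl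
  -- b is adjacent to all of K except m
  have hbadj : ∀ x ∈ K, x ≠ m → G.Adj b x := by
    intro x hxK hxm
    by_contra h
    exact hxm ((hbiff x hxK).mp h)
  -- key: no vertex outside K adjacent to both b and m
  have hAll : ∀ e, e ∉ K → G.Adj e b → G.Adj e m → False := by
    intro e heK heb hem
    have hax : ∀ x ∈ K, G.Adj e x := by
      intro x hxK
      by_cases hxm : x = m
      · exact hxm ▸ hem
      · by_contra hex
        -- C4 : e - b - x - m - e
        exact noC4 h2 heb (hbadj x hxK hxm) (hK.isClique hxK hmK hxm) hem.symm
          hex hbm (fun h => heK (h ▸ hxK)) (fun h => hbK (h ▸ hmK))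
    exact clique_insert_absurd hK hax
  -- counting: any vertex with a non-neighbor in K has ≥ 2 neighbors outside K
  have hcount : ∀ e x0, x0 ∈ K → ¬G.Adj e x0 → 2 ≤ (G.neighborFinset e \ K).card := by
    intro e x0 hx0K hex0
    have hsub : G.neighborFinset e ∩ K ⊆ K.erase x0 := by
      intro x hx
      rw [mem_inter, mem_neighborFinset] at hx
      exact mem_erase.mpr ⟨fun h => hex0 (h ▸ hx.1), hx.2⟩
    have h5 := card_le_card hsub
    rw [card_erase_of_mem hx0K, hK.card_eq] at h5
    have h6 : (G.neighborFinset e).card ≤ (G.neighborFinset e ∩ K).card +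
        (G.neighborFinset e \ K).card := le_of_eq (card_inter_add_card_sdiff _ _).symm
    rw [card_neighborFinset_eq_degree] at h6
    have := hcon e
    omega
  -- get c outside K adjacent to m
  have hc : ∃ c, c ∉ K ∧ G.Adj m c := by
    have h5 := hcount m m hmK (G.irrefl)
    have h6 : (G.neighborFinset m \ K).Nonempty := by
      rw [← card_pos]; omega
    obtain ⟨c, hc⟩ := h6
    rw [mem_sdiff, mem_neighborFinset] at hc
    exact ⟨c, hc.2, hc.1⟩
  obtain ⟨c, hcK, hmc⟩ := hc
  have hcb : ¬G.Adj c b := fun h => hAll c hcK h hmc.symm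
  have hcbne : c ≠ b := fun h => hbm (h ▸ hmc).symm
  -- Q' : at least two neighbors of b outside K
  have hQ' : 2 ≤ (G.neighborFinset b \ K).card := hcount b m hmK hbm
  obtain ⟨d, hd, d', hd', hdd'ne⟩ := one_lt_card.mp hQ'
  rw [mem_sdiff, mem_neighborFinset] at hd hd'
  obtain ⟨hbd, hdK⟩ := hd
  obtain ⟨hbd', hd'K⟩ := hd'
  -- members of Q' are not adjacent to m
  have hdm : ¬G.Adj d m := fun h => hAll d hdK hbd.symm h
  have hd'm : ¬G.Adj d' m := fun h => hAll d' hd'K hbd'.symm h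
  -- c is adjacent to every member of Q'
  have hcd : ∀ e, e ∉ K → G.Adj b e → ¬G.Adj e m → G.Adj c e := by
    intro e heK hbe hem
    by_contra hce
    -- 2K2 : edge c-m, edge b-e
    exact no2K2 h1 hmc.symm hbe hcb hce (fun h => hbm h.symm) (fun h => hem h.symm)
      hcbne (fun h => hem (h ▸ hmc).symm) (fun h => hbK (h ▸ hmK))
      (fun h => heK (h ▸ hmK))
  have hcdadj : G.Adj c d := hcd d hdK hbd hdm
  have hcd'adj : G.Adj c d' := hcd d' hd'K hbd' hd'm
  -- d and d' are adjacent (else C4 d - b - d' - c)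
  have hdd' : G.Adj d d' := by
    by_contra h
    exact noC4 h2 hbd.symm hbd' hcd'adj.symm hcdadj h (fun hh => hcb hh.symm)
      hdd'ne (fun hh => hcbne hh.symm)
  -- apply step2 to edge c d
  have key : ∀ e, e ∉ K → G.Adj c e → ¬G.Adj e m → ∃ m₂, m₂ ∈ K ∧ m₂ ≠ m ∧ ¬G.Adj e m₂ := by
    intro e heK hce hem
    obtain ⟨p, q, m₂, hor₂, hm₂K, hiff₂, hcont₂⟩ := step2 h1 h2 hK hcK heK hce
    rcases hor₂ with h | h <;> rw [Prod.mk.injEq] at h <;> obtain ⟨rfl, rfl⟩ := h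
    · -- p = c
      refine ⟨m₂, hm₂K, ?_, ?_⟩
      · intro hh
        exact ((hiff₂ m hmK).mpr hh.symm) hmc.symm
      · intro hh
        exact ((hiff₂ m₂ hm₂K).mpr rfl) (hcont₂ m₂ hm₂K hh)
    · -- p = e : then Adj c m → Adj e m, contradiction
      exact absurd (hcont₂ m hmK hmc.symm) hem
  obtain ⟨m₂, hm₂K, hm₂m, hdm₂⟩ := key d hdK hcdadj hdm
  obtain ⟨m₃, hm₃K, hm₃m, hd'm₃⟩ := key d' hd'K hcd'adj hd'm
  -- final contradiction via step2 on edge d d'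
  obtain ⟨p, q, m₄, hor₄, hm₄K, hiff₄, -⟩ := step2 h1 h2 hK hdK hd'K hdd'
  rcases hor₄ with h | h <;> rw [Prod.mk.injEq] at h <;> obtain ⟨rfl, rfl⟩ := h
  · have e1 : m = m₄ := (hiff₄ m hmK).mp hdm
    have e2 : m₂ = m₄ := (hiff₄ m₂ hm₂K).mp hdm₂
    exact hm₂m (e2.trans e1.symm)
  · have e1 : m = m₄ := (hiff₄ m hmK).mp hd'm
    have e2 : m₃ = m₄ := (hiff₄ m₃ hm₃K).mp hd'm₃
    exact hm₃m (e2.trans e1.symm)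
end

end

lemma isFreeOf_of_embedding {V V' W : Type*} {G : SimpleGraph V} {G' : SimpleGraph V'}
    {H : SimpleGraph W} (f : G' ↪g G) (h : IsFreeOf G H) : IsFreeOf G' H :=
  ⟨fun e => h.false (f.comp e)⟩

lemma cliqueNum_le_of_embedding {V V' : Type*} [Fintype V] [Fintype V']
    {G : SimpleGraph V} {G' : SimpleGraph V'} (f : G' ↪g G) :
    G'.cliqueNum ≤ G.cliqueNum := by
  classical
  obtain ⟨s, hs⟩ := G'.exists_isNClique_cliqueNum
  have hmap : (G'.map f.toEmbedding).IsNClique G'.cliqueNum (s.map f.toEmbedding) := hs.map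
  have hle : G'.map f.toEmbedding ≤ G := by
    rw [map_le_iff_le_comap]
    intro a b hab
    exact f.map_rel_iff.mpr hab
  have h2 := (hmap.mono hle).isClique.card_le_cliqueNum
  rwa [(hmap.mono hle).card_eq] at h2


lemma colorable_aux (k : ℕ) : ∀ (n : ℕ) {V : Type u} [Fintype V] (G : SimpleGraph V),
    Fintype.card V = n → IsFreeOf G (pK2 2) → IsFreeOf G C4 → G.cliqueNum ≤ k →
    G.Colorable (k + 1) := by
  intro n
  induction n using Nat.strong_induction_on with
  | _ n IH =>
    intro V _ G hcard h1 h2 hk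
    classical
    by_cases hne : Nonempty V
    · -- pick low degree vertex
      obtain ⟨v, hv⟩ := exists_degree_le h1 h2 hne
      -- induced subgraph on complement of v
      let G' : SimpleGraph {w : V // w ≠ v} := G.comap (fun w => (w : V))
      have femb : G' ↪g G := ⟨⟨fun w => (w : V), Subtype.val_injective⟩, Iff.rfl⟩
      have hcard' : Fintype.card {w : V // w ≠ v} = n - 1 := by
        have : Fintype.card {w : V // ¬(w = v)} = n - 1 := by
          rw [Fintype.card_subtype_compl, Fintype.card_subtype_eq, hcard]
        exact this
      have hn1 : n - 1 < n := by
        have : 0 < n := hcard ▸ Fintype.card_pos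
        omega
      have C' : G'.Colorable (k + 1) :=
        IH (n - 1) hn1 G' hcard' (isFreeOf_of_embedding femb h1)
          (isFreeOf_of_embedding femb h2)
          (le_trans (cliqueNum_le_of_embedding femb) hk)
      obtain ⟨Cc⟩ := C'
      -- colors used on the neighbors of v
      let used : Finset (Fin (k + 1)) := (G.neighborFinset v).attach.image
        (fun w => Cc ⟨w.1, fun h => G.irrefl (h ▸ (mem_neighborFinset _ _ _).mp w.2)⟩)
      have husedcard : used.card ≤ k := by
        calc used.card ≤ (G.neighborFinset v).attach.card := card_image_le
          _ = G.degree v := by rw [card_attach, card_neighborFinset_eq_degree]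
          _ ≤ k := le_trans hv hk
      have hc0 : ∃ c0 : Fin (k + 1), c0 ∉ used := by
        by_contra h
        push_neg at h
        have : (univ : Finset (Fin (k + 1))) ⊆ used := fun c _ => h c
        have := card_le_card this
        simp only [card_univ, Fintype.card_fin] at this
        omega
      obtain ⟨c0, hc0⟩ := hc0
      refine ⟨⟨fun w => if h : w = v then c0 else Cc ⟨w, h⟩, ?_⟩⟩
      intro a b hab
      by_cases ha : a = v
      · subst ha
        rw [dif_pos rfl, dif_neg hab.ne']
        intro h
        apply hc0
        rw [h]
        refine mem_image.mpr ⟨⟨b, (mem_neighborFinset _ _ _).mpr hab⟩, mem_attach _ _, rfl⟩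
      · by_cases hb : b = v
        · subst hb
          rw [dif_pos rfl, dif_neg ha]
          intro h
          apply hc0
          rw [← h]
          refine mem_image.mpr ⟨⟨a, (mem_neighborFinset _ _ _).mpr hab.symm⟩, mem_attach _ _, rfl⟩
        · rw [dif_neg ha, dif_neg hb]
          exact Cc.valid (by exact hab : G'.Adj ⟨a, ha⟩ ⟨b, hb⟩)
    · have : IsEmpty V := not_nonempty_iff.mp hne
      exact (G.colorable_of_fintype).mono (by simp)

theorem chromatic_le_of_2K2_C4_free {V : Type*} [Fintype V] (G : SimpleGraph V)
    (h1 : IsFreeOf G (pK2 2)) (h2 : IsFreeOf G C4) :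
    G.chromaticNumber ≤ ((G.cliqueNum + 1 : ℕ) : ℕ∞) := by
  classical
  have hcol : G.Colorable (G.cliqueNum + 1) :=
    colorable_aux G.cliqueNum (Fintype.card V) G rfl h1 h2 le_rfl
  exact hcol.chromaticNumber_le
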